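/- Let a₀ ∈ ℝ, let b : ℝ → ℝ be a continuous 2π-periodic function with mean b₀ = (1/2π)∫₀^{2π} b(y) dy, set c₀ = a₀ + i·b₀, and let ξ ∈ ℤ be such that e^{−2πi·ξ·c₀} ≠ 1. Let g : ℝ → ℂ be a continuous 2π-periodic function. Define H(t, τ) = a₀·τ + i·∫_{t−τ}^{t} b(y) dy and u(t) = (1 − e^{−2πi·ξ·c₀})^{−1} · ∫₀^{2π} e^{−i·ξ·H(t, τ)} · g(t − τ) dτ. Then u is 2π-periodic, continuously differentiable, satisfies u′(t) + i·ξ·(a₀ + i·b(t))·u(t) = g(t) for all t ∈ ℝ, and u is the unique 2π-periodic C¹ solution of this equation. -/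

import Mathlib

open Real

private lemma ftc_aux (f : ℝ → ℂ) (hf : Continuous f) (t : ℝ) :
    HasDerivAt (fun x => ∫ s in (0:ℝ)..x, f s) (f t) t :=
  intervalIntegral.integral_hasDerivAt_right (hf.intervalIntegrable _ _)
    hf.stronglyMeasurable.stronglyMeasurableAtFilter hf.continuousAt

private lemma ftc_aux_real (f : ℝ → ℝ) (hf : Continuous f) (t : ℝ) :
    HasDerivAt (fun x => ∫ s in (0:ℝ)..x, f s) (f t) t :=
  intervalIntegral.integral_hasDerivAt_right (hf.intervalIntegrable _ _)
    hf.stronglyMeasurable.stronglyMeasurableAtFilter hf.continuousAt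

/-- Explicit solution formula (4.1): with `H(t,τ) = a₀τ + i∫_{t-τ}^t b`, the function
`u(t) = (1-e^{-2πiξc₀})⁻¹ ∫₀^{2π} e^{-iξH(t,τ)} g(t-τ) dτ` is the unique `2π`-periodic
`C¹` solution of `u' + iξ(a₀ + ib(t))u = g`. -/
theorem stmt_6 (a₀ : ℝ) (b : ℝ → ℝ) (hb : Continuous b)
    (hbper : ∀ t, b (t + 2 * π) = b t)
    (b₀ : ℝ) (hb₀ : b₀ = (1 / (2 * π)) * ∫ y in (0:ℝ)..(2 * π), b y)
    (c₀ : ℂ) (hc₀ : c₀ = (a₀ : ℂ) + Complex.I * (b₀ : ℂ))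
    (ξ : ℤ) (hξ : Complex.exp (-(((2 * π : ℝ) : ℂ) * Complex.I * (ξ : ℂ) * c₀)) ≠ 1)
    (g : ℝ → ℂ) (hg : Continuous g) (hgper : ∀ t, g (t + 2 * π) = g t)
    (u : ℝ → ℂ)
    (hu : ∀ t, u t = (1 - Complex.exp (-(((2 * π : ℝ) : ℂ) * Complex.I * (ξ : ℂ) * c₀)))⁻¹ *
      ∫ τ in (0:ℝ)..(2 * π),
        Complex.exp (-(Complex.I * (ξ : ℂ) *
          (((a₀ * τ : ℝ) : ℂ) + Complex.I * (((∫ y in (t - τ)..t, b y) : ℝ) : ℂ)))) *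
        g (t - τ)) :
    (∀ t, u (t + 2 * π) = u t) ∧ ContDiff ℝ 1 u ∧
    (∀ t, deriv u t + Complex.I * (ξ : ℂ) * ((a₀ : ℂ) + Complex.I * (b t : ℂ)) * u t = g t) ∧
    (∀ v : ℝ → ℂ, (∀ t, v (t + 2 * π) = v t) → ContDiff ℝ 1 v →
      (∀ t, deriv v t + Complex.I * (ξ : ℂ) * ((a₀ : ℂ) + Complex.I * (b t : ℂ)) * v t = g t) →
      v = u) := by
  have hI : Complex.I * Complex.I = -1 := Complex.I_mul_I
  set q : ℂ := Complex.exp (-(((2 * π : ℝ) : ℂ) * Complex.I * (ξ : ℂ) * c₀)) with hqdef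
  have hq0 : q ≠ 0 := Complex.exp_ne_zero _
  have h1q : (1 : ℂ) - q ≠ 0 := sub_ne_zero_of_ne (fun h => hξ h.symm)
  -- antiderivative of b
  set Br : ℝ → ℝ := fun t => ∫ y in (0:ℝ)..t, b y with hBrdef
  have hBr : ∀ t, HasDerivAt Br (b t) t := ftc_aux_real b hb
  have hBrd : Differentiable ℝ Br := fun t => (hBr t).differentiableAt
  have hBrcont : Continuous Br := hBrd.continuous
  have hbint : ∀ x y : ℝ, IntervalIntegrable b MeasureTheory.volume x y :=
    fun x y => hb.intervalIntegrable x y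
  have hint : ∀ t τ : ℝ, (∫ y in (t - τ)..t, b y) = Br t - Br (t - τ) :=
    fun t τ => (intervalIntegral.integral_interval_sub_left (hbint 0 t) (hbint 0 (t - τ))).symm
  -- phase function
  set φ : ℝ → ℂ := fun t => Complex.I * (ξ : ℂ) * (a₀ : ℂ) * (t : ℂ) - (ξ : ℂ) * ((Br t : ℝ) : ℂ)
    with hφdef
  have hφ : ∀ t, HasDerivAt φ (Complex.I * (ξ : ℂ) * ((a₀ : ℂ) + Complex.I * (b t : ℂ))) t := by
    intro t
    have h1 : HasDerivAt (fun s : ℝ => ((s : ℝ) : ℂ)) 1 t := by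
      simpa using (hasDerivAt_id t).ofReal_comp
    have h2 := (hBr t).ofReal_comp
    have h3 := (h1.const_mul (Complex.I * (ξ : ℂ) * (a₀ : ℂ))).sub
      (h2.const_mul ((ξ : ℂ)))
    refine h3.congr_deriv (Eq.symm ?_)
    rw [mul_add]
    rw [show Complex.I * (ξ:ℂ) * (Complex.I * (b t : ℂ)) =
      (Complex.I * Complex.I) * ((ξ:ℂ) * (b t : ℂ)) by ring, hI]
    ring
  set E : ℝ → ℂ := fun t => Complex.exp (φ t) with hEdef
  have hE : ∀ t, HasDerivAt E (Complex.I * (ξ : ℂ) * ((a₀ : ℂ) + Complex.I * (b t : ℂ)) * E t) t := by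
    intro t
    have := (hφ t).cexp
    convert this using 1
    rw [hEdef]
    ring
  have hEd : Differentiable ℝ E := fun t => (hE t).differentiableAt
  have hEcont : Continuous E := hEd.continuous
  have hEnz : ∀ t, E t ≠ 0 := fun t => Complex.exp_ne_zero _
  set G : ℝ → ℂ := fun t => ∫ s in (0:ℝ)..t, E s * g s with hGdef
  have hG : ∀ t, HasDerivAt G (E t * g t) t := ftc_aux _ (hEcont.mul hg)
  have hEgint : ∀ x y : ℝ, IntervalIntegrable (fun s => E s * g s) MeasureTheory.volume x y :=
    fun x y => (hEcont.mul hg).intervalIntegrable x y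
  -- mean of b
  have hB2π : Br (2 * π) = 2 * π * b₀ := by
    have h2π : (2 * π) ≠ 0 := by positivity
    rw [hb₀, hBrdef]
    field_simp
  have hperb : Function.Periodic b (2 * π) := hbper
  have hBtrans : ∀ t, Br (t - 2 * π) = Br t - 2 * π * b₀ := by
    intro t
    have h1 : Br t - Br (t - 2 * π) = ∫ y in (t - 2*π)..t, b y :=
      intervalIntegral.integral_interval_sub_left (hbint 0 t) (hbint 0 (t - 2*π))
    have h2 : (∫ y in (t - 2*π)..((t - 2*π) + 2*π), b y) = ∫ y in (0:ℝ)..(0 + 2*π), b y :=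
      hperb.intervalIntegral_add_eq (t - 2*π) 0
    rw [show (t - 2*π) + 2*π = t by ring, zero_add] at h2
    have h3 : (∫ y in (0:ℝ)..(2*π), b y) = 2 * π * b₀ := hB2π
    rw [h2, h3] at h1
    linarith
  -- periodicity relation for E
  have hEper : ∀ t, E (t - 2 * π) = q * E t := by
    intro t
    rw [hqdef]
    simp only [hEdef, ← Complex.exp_add]
    congr 1
    simp only [hφdef]
    have hc : ((Br (t - 2*π) : ℝ) : ℂ) = ((Br t : ℝ) : ℂ) - 2 * π * b₀ := by
      rw [hBtrans t]; push_cast; ring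
    rw [hc, hc₀]
    push_cast
    rw [show -(((2:ℂ) * π) * Complex.I * (ξ:ℂ) * ((a₀:ℂ) + Complex.I * (b₀:ℂ)))
        = -(2 * π * Complex.I * (ξ:ℂ) * (a₀:ℂ))
          - (Complex.I * Complex.I) * (2 * π * (ξ:ℂ) * (b₀:ℂ)) by ring, hI]
    ring
  -- the key closed formula
  have hukey : ∀ t, u t = (1 - q)⁻¹ * (Complex.exp (-φ t) * (G t - G (t - 2 * π))) := by
    intro t
    rw [hu t]
    congr 1
    have hstep : ∀ τ : ℝ,
        Complex.exp (-(Complex.I * (ξ : ℂ) *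
          (((a₀ * τ : ℝ) : ℂ) + Complex.I * (((∫ y in (t - τ)..t, b y) : ℝ) : ℂ)))) * g (t - τ)
        = Complex.exp (-φ t) * (E (t - τ) * g (t - τ)) := by
      intro τ
      rw [hint t τ]
      rw [← mul_assoc]
      congr 1
      simp only [hEdef, ← Complex.exp_add]
      congr 1
      simp only [hφdef]
      push_cast
      rw [show -(Complex.I * (ξ:ℂ) * ((a₀:ℂ) * (τ:ℂ) + Complex.I * ((Br t : ℂ) - (Br (t - τ) : ℂ))))
          = -(Complex.I * (ξ:ℂ) * (a₀:ℂ) * (τ:ℂ))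
            - (Complex.I * Complex.I) * ((ξ:ℂ) * ((Br t : ℂ) - (Br (t - τ) : ℂ))) by ring, hI]
      ring
    rw [intervalIntegral.integral_congr (fun τ _ => hstep τ)]
    rw [intervalIntegral.integral_const_mul]
    congr 1
    rw [intervalIntegral.integral_comp_sub_left (fun s => E s * g s) t]
    rw [sub_zero]
    exact (intervalIntegral.integral_interval_sub_left (hEgint 0 t) (hEgint 0 (t - 2*π))).symm
  -- derivative of u
  have hgper' : ∀ t, g (t - 2 * π) = g t := by
    intro t
    conv_rhs => rw [show t = (t - 2*π) + 2*π by ring, hgper]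
  have hu' : ∀ t, HasDerivAt u
      (g t - Complex.I * (ξ : ℂ) * ((a₀ : ℂ) + Complex.I * (b t : ℂ)) * u t) t := by
    intro t
    have hUu : u = fun t => (1 - q)⁻¹ * (Complex.exp (-φ t) * (G t - G (t - 2 * π))) :=
      funext hukey
    rw [hUu]
    have hexp : HasDerivAt (fun t => Complex.exp (-φ t))
        (-(Complex.I * (ξ : ℂ) * ((a₀ : ℂ) + Complex.I * (b t : ℂ))) * Complex.exp (-φ t)) t := by
      have := ((hφ t).neg).cexp
      exact this.congr_deriv (mul_comm _ _)
    have hF : HasDerivAt (fun t => G t - G (t - 2 * π))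
        (E t * g t - E (t - 2 * π) * g (t - 2 * π)) t := by
      have h1 := hG t
      have h2 := (hG (t - 2*π)).comp_sub_const t (2*π)
      exact h1.sub h2
    have hprod := ((hexp.mul hF).const_mul ((1 - q)⁻¹))
    refine hprod.congr_deriv (Eq.symm ?_)
    rw [hEper t, hgper' t]
    have hEE : Complex.exp (-φ t) * E t = 1 := by
      simp only [hEdef, ← Complex.exp_add]
      simp
    have hK : (1 - q)⁻¹ * (1 - q) = 1 := inv_mul_cancel₀ h1q
    linear_combination (-(1 - q) * (1 - q)⁻¹ * g t) * hEE + (-(g t)) * hK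
  have hudiff : Differentiable ℝ u := fun t => (hu' t).differentiableAt
  have hderiv : ∀ t, deriv u t
      = g t - Complex.I * (ξ : ℂ) * ((a₀ : ℂ) + Complex.I * (b t : ℂ)) * u t :=
    fun t => (hu' t).deriv
  have hucont : Continuous u := hudiff.continuous
  have huper : ∀ t, u (t + 2 * π) = u t := by
    intro t
    rw [hu (t + 2*π), hu t]
    congr 1
    apply intervalIntegral.integral_congr
    intro τ _
    have hb2 : (∫ y in (t + 2*π - τ)..(t + 2*π), b y) = ∫ y in (t - τ)..t, b y := by
      rw [show t + 2*π - τ = (t - τ) + 2*π by ring,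
        ← intervalIntegral.integral_comp_add_right b (2*π)]
      simp only [hbper]
    have hg2 : g (t + 2*π - τ) = g (t - τ) := by
      rw [show t + 2*π - τ = (t - τ) + 2*π by ring, hgper]
    beta_reduce
    rw [hb2, hg2]
  refine ⟨huper, ?_, ?_, ?_⟩
  · -- C¹
    rw [contDiff_one_iff_deriv]
    refine ⟨hudiff, ?_⟩
    have hde : deriv u = fun t =>
        g t - Complex.I * (ξ : ℂ) * ((a₀ : ℂ) + Complex.I * (b t : ℂ)) * u t :=
      funext hderiv
    rw [hde]
    fun_prop
  · -- the ODE
    intro t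
    rw [hderiv t]; ring
  · -- uniqueness
    intro v hvper hvC1 hvode
    have hvd : Differentiable ℝ v := hvC1.differentiable one_ne_zero
    set w : ℝ → ℂ := fun t => v t - u t with hwdef
    have hw' : ∀ t, HasDerivAt w
        (-(Complex.I * (ξ : ℂ) * ((a₀ : ℂ) + Complex.I * (b t : ℂ))) * w t) t := by
      intro t
      have h1 : HasDerivAt v (deriv v t) t := (hvd t).hasDerivAt
      have h2 := (h1.sub (hu' t))
      have h3 : deriv v t
          = g t - Complex.I * (ξ : ℂ) * ((a₀ : ℂ) + Complex.I * (b t : ℂ)) * v t := by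
        linear_combination hvode t
      rw [h3] at h2
      refine h2.congr_deriv (Eq.symm ?_)
      simp only [hwdef]
      ring
    set W : ℝ → ℂ := fun t => E t * w t with hWdef
    have hW' : ∀ t, HasDerivAt W 0 t := by
      intro t
      have := (hE t).mul (hw' t)
      refine this.congr_deriv (Eq.symm ?_)
      ring
    have hWconst : ∀ x : ℝ, W x = W 0 :=
      fun x => is_const_of_deriv_eq_zero (fun t => (hW' t).differentiableAt)
        (fun t => (hW' t).deriv) x 0
    have hE0 : E 0 = 1 := by
      simp [hEdef, hφdef, hBrdef, intervalIntegral.integral_same]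
    have hw2π : w (2 * π) = w 0 := by
      have hv2 : v (2 * π) = v 0 := by rw [show (2*π : ℝ) = 0 + 2*π by ring, hvper]
      have hu2 : u (2 * π) = u 0 := by
        rw [show (2*π : ℝ) = 0 + 2*π by ring, huper]
      simp only [hwdef, hv2, hu2]
    have hE2π : E (2 * π) = q⁻¹ := by
      have h := hEper (2 * π)
      rw [show (2*π : ℝ) - 2*π = 0 by ring, hE0] at h
      exact (inv_eq_of_mul_eq_one_right h.symm).symm
    have hw0 : w 0 = 0 := by
      have h1 : W (2 * π) = W 0 := hWconst (2 * π)
      simp only [hWdef] at h1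
      rw [hE2π, hE0, hw2π, one_mul] at h1
      have hq1' : q⁻¹ ≠ 1 := by
        intro h
        apply hξ
        rw [← inv_inv q, h, inv_one]
      have h2 : (q⁻¹ - 1) * w 0 = 0 := by linear_combination h1
      rcases mul_eq_zero.mp h2 with h | h
      · exact absurd (by linear_combination h : q⁻¹ = 1) hq1'
      · exact h
    funext t
    have h1 : W t = W 0 := hWconst t
    simp only [hWdef] at h1
    rw [hE0, hw0, one_mul, mul_comm] at h1
    have hwt : w t = 0 := (mul_eq_zero.mp h1).resolve_right (hEnz t)
    exact sub_eq_zero.mp hwt
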